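/- Let G be a group with a finite presentation ⟨S : R⟩ satisfying the hypotheses of the Main Theorem, and suppose in addition that every generator s ∈ S occurs in some relation r ∈ R. Then G is one-ended; precisely, the Cayley graph Cay(G, S̄) of G with respect to the (finite) image S̄ of S in G has exactly one end, i.e. its end space is nonempty and has exactly one element. -/

import Mathlib

/-- The generator `s` occurs in the relation `r` if `s` or `s⁻¹` appears as a letter of the
reduced word `r`. -/
def OccursIn {α : Type*} [DecidableEq α] (s : α) (r : FreeGroup α) : Prop :=
  ∃ b : Bool, (s, b) ∈ r.toWord

/-- The finite presentation `⟨α : rels⟩` satisfies the hypotheses of the Main Theorem: there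
are pairwise commuting elements `t 0, …, t (p-1)` with `p ≥ 3` generating a copy of `ℤ^p`,
such that (1) for every relation `r` some `t i₀` commutes with the image of every generator
occurring in `r`, and (2) for every generator `s` occurring in `r` some `t i ≠ t i₀` commutes
with the image of `s`. -/
def SatisfiesMainHyp {α : Type*} [DecidableEq α] (rels : Set (FreeGroup α)) : Prop :=
  ∃ p : ℕ, 3 ≤ p ∧ ∃ t : Fin p → PresentedGroup rels,
    (∀ i j, Commute (t i) (t j)) ∧
    Function.Injective (fun n : Fin p → ℤ => (List.ofFn fun i => t i ^ n i).prod) ∧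
    ∀ r ∈ rels, ∃ i₀ : Fin p,
      (∀ s : α, OccursIn s r → Commute (t i₀) (PresentedGroup.of s)) ∧
      (∀ s : α, OccursIn s r →
        ∃ i : Fin p, t i ≠ t i₀ ∧ Commute (t i) (PresentedGroup.of s))

/-- The Cayley graph of a group `G` with respect to a generating set `S`: distinct vertices
`v, w` are adjacent iff `v⁻¹ * w ∈ S ∪ S⁻¹`. -/
def cayleyGraph {G : Type*} [Group G] (S : Set G) : SimpleGraph G where
  Adj v w := v ≠ w ∧ v⁻¹ * w ∈ S ∪ S⁻¹
  symm := ⟨by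
    rintro v w ⟨hne, h⟩
    refine ⟨hne.symm, ?_⟩
    have hw : w⁻¹ * v = (v⁻¹ * w)⁻¹ := by group
    rw [hw]
    rcases h with h | h
    · exact Or.inr (by simpa [Set.mem_inv] using h)
    · exact Or.inl (Set.mem_inv.mp h)⟩
  loopless := ⟨fun v h => h.1 rfl⟩


namespace OneEnded



open SimpleGraph

variable {V : Type*}

/-- Connectivity avoiding a set `K`. -/
def Conn (Γ : SimpleGraph V) (K : Set V) (x y : V) : Prop :=
  ∃ w : Γ.Walk x y, ∀ z ∈ w.support, z ∉ K

variable {Γ : SimpleGraph V} {K : Set V}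

lemma Conn.refl {x : V} (hx : x ∉ K) : Conn Γ K x x :=
  ⟨.nil, by simp [hx]⟩

lemma Conn.symm {x y : V} (h : Conn Γ K x y) : Conn Γ K y x := by
  obtain ⟨w, hw⟩ := h
  exact ⟨w.reverse, by simpa [SimpleGraph.Walk.support_reverse] using hw⟩

lemma Conn.trans {x y z : V} (h : Conn Γ K x y) (h' : Conn Γ K y z) : Conn Γ K x z := by
  obtain ⟨w, hw⟩ := h
  obtain ⟨w', hw'⟩ := h'
  refine ⟨w.append w', fun u hu => ?_⟩
  rcases (SimpleGraph.Walk.mem_support_append_iff _ _).1 hu with h | h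
  · exact hw u h
  · exact hw' u h

lemma Conn.left_not_mem {x y : V} (h : Conn Γ K x y) : x ∉ K := by
  obtain ⟨w, hw⟩ := h; exact hw x w.start_mem_support

lemma Conn.right_not_mem {x y : V} (h : Conn Γ K x y) : y ∉ K := by
  obtain ⟨w, hw⟩ := h; exact hw y w.end_mem_support

lemma Conn.reachable_induce {x y : V} (hx : x ∈ Kᶜ) (hy : y ∈ Kᶜ) (h : Conn Γ K x y) :
    (Γ.induce Kᶜ).Reachable ⟨x, hx⟩ ⟨y, hy⟩ := by
  suffices H : ∀ {x y : V} (w : Γ.Walk x y), (∀ z ∈ w.support, z ∉ K) →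
      ∀ (hx : x ∈ Kᶜ) (hy : y ∈ Kᶜ), (Γ.induce Kᶜ).Reachable ⟨x, hx⟩ ⟨y, hy⟩ by
    obtain ⟨w, hw⟩ := h
    exact H w hw hx hy
  clear hx hy h x y
  intro x y w
  induction w with
  | nil => intro _ hx hy; exact Reachable.refl _
  | @cons a b c hab p ih =>
    intro hw hx hy
    have hb : b ∈ Kᶜ := hw b (by simp)
    have h1 : (Γ.induce Kᶜ).Adj ⟨a, hx⟩ ⟨b, hb⟩ := by
      simpa using hab
    exact (h1.reachable).trans (ih (fun z hz => hw z (by simp [hz])) hb hy)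

lemma conn_mono {K' : Set V} (hK : K ⊆ K') {x y : V} (h : Conn Γ K' x y) : Conn Γ K x y := by
  obtain ⟨w, hw⟩ := h
  exact ⟨w, fun z hz hzk => hw z hz (hK hzk)⟩

/-- products of commuting `ofFn` lists -/
lemma ofFn_prod_mul {G : Type*} [Monoid G] :
    ∀ {n : ℕ} (f g : Fin n → G), (∀ i j, Commute (f i) (g j)) →
      (List.ofFn fun i => f i * g i).prod = (List.ofFn f).prod * (List.ofFn g).prod := by
  intro n
  induction n with
  | zero => intro f g _; simp
  | succ n ih =>
    intro f g hfg
    have hc : Commute (g 0) (List.ofFn fun i : Fin n => f i.succ).prod := by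
      refine Commute.list_prod_right _ _ (fun x hx => ?_)
      rw [List.mem_ofFn] at hx
      obtain ⟨i, rfl⟩ := hx
      exact (hfg i.succ 0).symm
    rw [List.ofFn_succ, List.ofFn_succ (f := f), List.ofFn_succ (f := g),
      List.prod_cons, List.prod_cons, List.prod_cons,
      ih (fun i => f i.succ) (fun i => g i.succ) (fun i j => hfg i.succ j.succ)]
    rw [mul_assoc, ← mul_assoc (g 0), hc.eq, mul_assoc (f 0), ← mul_assoc ((List.ofFn fun i : Fin n => f i.succ).prod), ← mul_assoc, ← mul_assoc]

lemma ofFn_prod_eq_single {G : Type*} [Monoid G] :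
    ∀ {n : ℕ} (f : Fin n → G) (i : Fin n), (∀ j, j ≠ i → f j = 1) →
      (List.ofFn f).prod = f i := by
  intro n
  induction n with
  | zero => intro _ i; exact i.elim0
  | succ n ih =>
    intro f i h
    rcases Fin.eq_zero_or_eq_succ i with rfl | ⟨j, rfl⟩
    · rw [List.ofFn_succ, List.prod_cons]
      have : (List.ofFn fun i : Fin n => f i.succ).prod = 1 := by
        refine List.prod_eq_one (fun x hx => ?_)
        rw [List.mem_ofFn] at hx
        obtain ⟨k, rfl⟩ := hx
        exact h k.succ (Fin.succ_ne_zero k)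
      rw [this, mul_one]
    · rw [List.ofFn_succ, List.prod_cons, h 0 (Fin.succ_ne_zero j).symm, one_mul]
      exact ih (fun k => f k.succ) j (fun k hk => h k.succ (by simpa using hk))

/-- a finite set of integer vectors is bounded above -/
lemma bdd_of_finite {p : ℕ} {W : Set (Fin p → ℤ)} (h : W.Finite) :
    ∃ N : ℕ, ∀ v ∈ W, ∀ i, v i < (N : ℤ) := by
  classical
  refine ⟨(h.toFinset.sup fun v => Finset.univ.sup fun i => (v i).toNat) + 1, ?_⟩
  intro v hv i
  have h0 : (v i).toNat ≤ Finset.univ.sup fun i => (v i).toNat :=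
    Finset.le_sup (f := fun i => (v i).toNat) (Finset.mem_univ i)
  have h1' : (Finset.univ.sup fun i => (v i).toNat) ≤
      h.toFinset.sup fun v => Finset.univ.sup fun i => (v i).toNat :=
    Finset.le_sup (f := fun v => Finset.univ.sup fun i => (v i).toNat) (h.mem_toFinset.2 hv)
  have h1 : (v i).toNat ≤ h.toFinset.sup fun v => Finset.univ.sup fun i => (v i).toNat :=
    le_trans h0 h1'

  calc v i ≤ ((v i).toNat : ℤ) := Int.self_le_toNat _
    _ < _ := by exact_mod_cast Nat.lt_succ_of_le h1


section Vec

variable {G : Type*} [Group G] {p : ℕ}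

/-- product of powers of the `t i`. -/
def Evec (t : Fin p → G) (v : Fin p → ℤ) : G := (List.ofFn fun i => t i ^ v i).prod

/-- elementary vector. -/
def evec (p : ℕ) (a : Fin p) (k : ℤ) : Fin p → ℤ := fun j => if j = a then k else 0

@[simp] lemma evec_apply (a : Fin p) (k : ℤ) (j : Fin p) :
    evec p a k j = if j = a then k else 0 := rfl

lemma evec_zero (a : Fin p) : evec p a 0 = 0 := by
  funext j; simp [evec]

lemma evec_addk (a : Fin p) (m n : ℤ) : evec p a (m + n) = evec p a m + evec p a n := by
  funext j; simp only [evec, Pi.add_apply]; split_ifs <;> simp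

variable {t : Fin p → G}

lemma Evec_add (hcomm : ∀ i j, Commute (t i) (t j)) (v w : Fin p → ℤ) :
    Evec t (v + w) = Evec t v * Evec t w := by
  unfold Evec
  rw [← ofFn_prod_mul (fun i => t i ^ v i) (fun i => t i ^ w i)
    (fun i j => (hcomm i j).zpow_zpow _ _)]
  simp only [Pi.add_apply, zpow_add]

lemma Evec_single (a : Fin p) (k : ℤ) : Evec t (evec p a k) = t a ^ k := by
  have h := ofFn_prod_eq_single (fun i => t i ^ evec p a k i) a ?_
  · rw [Evec, h, evec_apply, if_pos rfl]
  · intro j hj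
    simp [evec_apply, if_neg hj]

lemma Evec_zero' : Evec t 0 = 1 := by
  refine List.prod_eq_one (fun x hx => ?_)
  rw [List.mem_ofFn] at hx
  obtain ⟨i, rfl⟩ := hx
  simp

lemma Evec_commute (x : G) (v : Fin p → ℤ) (h : ∀ i, v i ≠ 0 → Commute (t i) x) :
    Commute (Evec t v) x := by
  refine Commute.list_prod_left _ _ (fun y hy => ?_)
  rw [List.mem_ofFn] at hy
  obtain ⟨i, rfl⟩ := hy
  by_cases hvi : v i = 0
  · simp [hvi]
  · exact (h i hvi).zpow_left _

end Vec

section Cayley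

variable {G : Type*} [Group G] {S : Set G}

lemma cayley_walk (S : Set G) (y : G) (l : List G) (hl : ∀ σ ∈ l, σ ∈ S ∪ S⁻¹) :
    ∃ w : (cayleyGraph S).Walk y (y * l.prod),
      ∀ z ∈ w.support, ∃ q : List G, q <+: l ∧ z = y * q.prod := by
  induction l generalizing y with
  | nil =>
    refine ⟨(SimpleGraph.Walk.nil : (cayleyGraph S).Walk y y).copy rfl (by simp), ?_⟩
    intro z hz
    rw [SimpleGraph.Walk.support_copy] at hz
    simp only [SimpleGraph.Walk.support_nil, List.mem_singleton] at hz
    exact ⟨[], List.nil_prefix, by simp [hz]⟩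
  | cons σ l ih =>
    have hσ : σ ∈ S ∪ S⁻¹ := hl σ (List.mem_cons_self)
    obtain ⟨w', hw'⟩ := ih (y * σ) (fun τ hτ => hl τ (List.mem_cons_of_mem _ hτ))
    by_cases he : y = y * σ
    · refine ⟨w'.copy he.symm (by rw [List.prod_cons, mul_assoc]), ?_⟩
      intro z hz
      rw [SimpleGraph.Walk.support_copy] at hz
      obtain ⟨q, hq, rfl⟩ := hw' z hz
      exact ⟨σ :: q, List.cons_prefix_cons.2 ⟨rfl, hq⟩, by rw [List.prod_cons, mul_assoc]⟩
    · have adj : (cayleyGraph S).Adj y (y * σ) := ⟨he, by rwa [inv_mul_cancel_left]⟩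
      refine ⟨(SimpleGraph.Walk.cons adj w').copy rfl (by rw [List.prod_cons, mul_assoc]), ?_⟩
      intro z hz
      rw [SimpleGraph.Walk.support_copy, SimpleGraph.Walk.support_cons] at hz
      rcases List.mem_cons.1 hz with rfl | hz
      · exact ⟨[], List.nil_prefix, by simp⟩
      · obtain ⟨q, hq, rfl⟩ := hw' z hz
        exact ⟨σ :: q, List.cons_prefix_cons.2 ⟨rfl, hq⟩, by rw [List.prod_cons, mul_assoc]⟩

lemma list_conn (K : Set G) (y : G) (l : List G) (hl : ∀ σ ∈ l, σ ∈ S ∪ S⁻¹)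
    (hpre : ∀ q : List G, q <+: l → y * q.prod ∉ K) :
    Conn (cayleyGraph S) K y (y * l.prod) := by
  obtain ⟨w, hw⟩ := cayley_walk S y l hl
  refine ⟨w, fun z hz => ?_⟩
  obtain ⟨q, hq, rfl⟩ := hw z hz
  exact hpre q hq

lemma exists_word (hS : Subgroup.closure S = ⊤) (g : G) :
    ∃ l : List G, (∀ σ ∈ l, σ ∈ S ∪ S⁻¹) ∧ l.prod = g := by
  have h1 : g ∈ Subgroup.closure S := by rw [hS]; trivial
  have h2 : g ∈ Submonoid.closure (S ∪ S⁻¹) := by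
    rw [← Subgroup.closure_toSubmonoid]
    exact h1
  exact Submonoid.exists_list_of_mem_closure h2

lemma cayley_preconnected (hS : Subgroup.closure S = ⊤) : (cayleyGraph S).Preconnected := by
  intro u v
  obtain ⟨l, hl, hprod⟩ := exists_word hS (u⁻¹ * v)
  obtain ⟨w, -⟩ := cayley_walk S u l hl
  exact ⟨w.copy rfl (by rw [hprod, mul_inv_cancel_left])⟩

noncomputable def cayley_locallyFinite (hSfin : S.Finite) : (cayleyGraph S).LocallyFinite := by
  intro v
  have hfin : ((cayleyGraph S).neighborSet v).Finite := by
    apply Set.Finite.subset ((hSfin.union hSfin.inv).image (fun σ => v * σ))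
    rintro w ⟨hne, hw⟩
    exact ⟨v⁻¹ * w, hw, by simp⟩
  exact hfin.fintype

end Cayley

section Escape

variable {G : Type*} [Group G]

theorem exists_escape (S : Set G) (hS : Subgroup.closure S = ⊤) (hSfin : S.Finite)
    {p : ℕ} (t : Fin p → G)
    (hcomm : ∀ i j, Commute (t i) (t j))
    (hinj : Function.Injective fun n : Fin p → ℤ => (List.ofFn fun i => t i ^ n i).prod)
    (dir : ∀ σ ∈ S ∪ S⁻¹, ∃ a b : Fin p, a ≠ b ∧ Commute (t a) σ ∧ Commute (t b) σ)
    (K : Set G) (hK : K.Finite) :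
    ∃ K' : Set G, K'.Finite ∧ K ⊆ K' ∧
      ∀ g ∉ K', ∀ h ∉ K', Conn (cayleyGraph S) K g h := by
  classical
  have hinjE : Function.Injective (Evec t) := hinj
  -- words for the t i
  have hword : ∀ i : Fin p, ∃ l : List G, (∀ σ ∈ l, σ ∈ S ∪ S⁻¹) ∧ l.prod = t i :=
    fun i => exists_word hS (t i)
  choose W hWmem hWprod using hword
  -- the finite set of "displacements" along elementary moves
  set F : Set G := {1} ∪ (S ∪ S⁻¹) ∪
    ⋃ i : Fin p, Set.range (fun n : Fin ((W i).length + 1) => ((W i).take n).prod) with hF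
  have hFfin : F.Finite := by
    refine (Set.Finite.union (Set.Finite.union (Set.finite_singleton 1)
      (hSfin.union hSfin.inv)) (Set.finite_iUnion fun i => Set.finite_range _))
  have h1F : (1 : G) ∈ F := Or.inl (Or.inl rfl)
  have hSF : ∀ σ ∈ S ∪ S⁻¹, σ ∈ F := fun σ hσ => Or.inl (Or.inr hσ)
  have hprefF : ∀ (i : Fin p) (q : List G), q <+: W i → q.prod ∈ F := by
    intro i q hq
    refine Or.inr (Set.mem_iUnion.2 ⟨i, ⟨⟨q.length, Nat.lt_succ_of_le hq.length_le⟩, ?_⟩⟩)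
    simp only
    rw [← List.prefix_iff_eq_take.mp hq]
  -- the thickened obstacle
  set Bad : Set G := {x | ∃ f ∈ F, x * f ∈ K} with hBadDef
  have hBadfin : Bad.Finite := by
    have hsub : Bad ⊆ ⋃ f ∈ F, (fun y => y * f⁻¹) '' K := by
      rintro x ⟨f, hf, hxf⟩
      exact Set.mem_biUnion hf ⟨x * f, hxf, by simp⟩
    exact (hFfin.biUnion fun f _ => hK.image _).subset hsub
  have hBadK : ∀ y, y ∉ Bad → y ∉ K := fun y hy hyK => hy ⟨1, h1F, by simpa⟩
  set M : ℕ := hBadfin.toFinset.card with hM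
  have hxinj : ∀ x : G, Function.Injective fun v => x * Evec t v :=
    fun x v w h => hinjE (mul_left_cancel h)
  have hVbound : ∀ x : G, ∃ N : ℕ, ∀ v : Fin p → ℤ, x * Evec t v ∈ Bad → ∀ i, v i < (N : ℤ) := by
    intro x
    have hfin : ((fun v => x * Evec t v) ⁻¹' Bad).Finite :=
      Set.Finite.preimage (Set.injOn_of_injective (hxinj x)) hBadfin
    obtain ⟨N, hN⟩ := bdd_of_finite hfin
    exact ⟨N, fun v hv i => hN v hv i⟩
  have hnotbad : ∀ (x : G) (N : ℕ), (∀ v, x * Evec t v ∈ Bad → ∀ i, v i < (N : ℤ)) →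
      ∀ n : ℕ, N ≤ n → ∀ v : Fin p → ℤ, (∃ i, (n : ℤ) ≤ v i) → x * Evec t v ∉ Bad := by
    intro x N hN n hn v hv hbad
    obtain ⟨i, hi⟩ := hv
    exact absurd (hN v hbad i) (not_lt.2 (le_trans (by exact_mod_cast hn) hi))
  -- elementary moves
  have hseg : ∀ y : G, y ∉ Bad → ∀ a : Fin p, Conn (cayleyGraph S) K y (y * t a) := by
    intro y hy a
    have h := list_conn K y (W a) (hWmem a) (fun q hq hqK => hy ⟨q.prod, hprefF a q hq, hqK⟩)
    rwa [hWprod a] at h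
  have hcross : ∀ y : G, y ∉ Bad → ∀ σ ∈ S ∪ S⁻¹, Conn (cayleyGraph S) K y (y * σ) := by
    intro y hy σ hσ
    have h := list_conn K y [σ] (by simpa using hσ) ?_
    · simpa using h
    · intro q hq hqK
      rcases q with _ | ⟨ρ, q'⟩
      · exact hy ⟨1, h1F, by simpa using hqK⟩
      · obtain ⟨heq, hq'⟩ := List.cons_prefix_cons.1 hq
        rw [List.prefix_nil.mp hq', heq] at hqK
        exact hy ⟨σ, hSF σ hσ, by simpa using hqK⟩
  -- climbing along a coordinate
  have hclimb : ∀ (x : G) (v : Fin p → ℤ) (a : Fin p) (n : ℕ),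
      (∀ j : ℕ, j ≤ n → x * Evec t (v + evec p a j) ∉ Bad) →
      Conn (cayleyGraph S) K (x * Evec t v) (x * Evec t (v + evec p a n)) := by
    intro x v a n
    induction n with
    | zero =>
      intro hj
      have h0 := hj 0 le_rfl
      have e0 : v + evec p a ((0 : ℕ) : ℤ) = v := by
        rw [Nat.cast_zero, evec_zero, add_zero]
      rw [e0] at h0 ⊢
      exact Conn.refl (hBadK _ h0)
    | succ n ih =>
      intro hj
      have hsrc : x * Evec t (v + evec p a n) ∉ Bad := hj n (Nat.le_succ n)
      have hstep := hseg _ hsrc a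
      have heq : x * Evec t (v + evec p a ((n + 1 : ℕ) : ℤ)) =
          x * Evec t (v + evec p a (n : ℕ)) * t a := by
        have : ((n + 1 : ℕ) : ℤ) = (n : ℤ) + 1 := by push_cast; ring
        rw [this, evec_addk, ← add_assoc, Evec_add hcomm, Evec_single, zpow_one, ← mul_assoc]
      rw [heq]
      exact (ih fun j hjn => hj j (le_trans hjn (Nat.le_succ n))).trans hstep
  -- switching towers
  have hswitch : ∀ (x : G) (a b a' : Fin p), a ≠ b → ∃ N : ℕ, ∀ n : ℕ, N ≤ n → ∀ d : ℕ,
      Conn (cayleyGraph S) K (x * Evec t (evec p b d + evec p a n))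
        (x * Evec t (evec p a' n)) := by
    intro x a b a' hab
    obtain ⟨N, hN⟩ := hVbound x
    refine ⟨N, fun n hn d => ?_⟩
    have nb := hnotbad x N hN n hn
    have P1 : Conn (cayleyGraph S) K (x * Evec t (evec p b d + evec p a n))
        (x * Evec t (evec p b d + evec p a n + evec p a' n)) := by
      refine hclimb x _ a' n (fun j hj => nb _ ⟨a, ?_⟩)
      simp only [Pi.add_apply, evec_apply]
      split_ifs <;> omega
    have P2 : Conn (cayleyGraph S) K (x * Evec t (evec p b d + evec p a n + evec p a' n))
        (x * Evec t (evec p b d + evec p a' n)) := by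
      have h := hclimb x (evec p b d + evec p a' n) a n (fun j hj => nb _ ⟨a', ?_⟩)
      · have hveq : evec p b d + evec p a' n + evec p a n =
            evec p b d + evec p a n + evec p a' n := by abel
        rw [hveq] at h
        exact h.symm
      · simp only [Pi.add_apply, evec_apply]
        split_ifs <;> omega
    have P3 : Conn (cayleyGraph S) K (x * Evec t (evec p b d + evec p a' n))
        (x * Evec t (evec p a' n)) := by
      have h := hclimb x (evec p a' n) b d (fun j hj => nb _ ⟨a', ?_⟩)
      · have hveq : evec p a' n + evec p b d = evec p b d + evec p a' n := by abel
        rw [hveq] at h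
        exact h.symm
      · simp only [Pi.add_apply, evec_apply]
        split_ifs <;> omega
    exact (P1.trans P2).trans P3
  -- commuting of carried towers with a letter
  have hEcomm : ∀ (σ : G) (aa bb : Fin p), Commute (t aa) σ → Commute (t bb) σ →
      ∀ (d n : ℤ), Commute (Evec t (evec p bb d + evec p aa n)) σ := by
    intro σ aa bb ha hb d n
    refine Evec_commute σ _ (fun i hi => ?_)
    simp only [Pi.add_apply, evec_apply] at hi
    by_cases h1 : i = bb
    · exact h1 ▸ hb
    · by_cases h2 : i = aa
      · exact h2 ▸ ha
      · simp [h1, h2] at hi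
  -- traversing a word at height n
  have htrav : ∀ l : List G, (∀ σ ∈ l, σ ∈ S ∪ S⁻¹) → ∀ x : G, ∀ a b : Fin p, a ≠ b →
      (∀ σ ∈ l.head?, Commute (t a) σ ∧ Commute (t b) σ) → ∀ a'' : Fin p,
      ∃ N : ℕ, ∀ n : ℕ, N ≤ n → ∀ d : ℕ,
        Conn (cayleyGraph S) K (x * Evec t (evec p b d + evec p a n))
          (x * l.prod * Evec t (evec p a'' n)) := by
    intro l
    induction l with
    | nil =>
      intro _ x a b hab _ a''
      obtain ⟨N, hN⟩ := hswitch x a b a'' hab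
      refine ⟨N, fun n hn d => ?_⟩
      have := hN n hn d
      simpa using this
    | cons σ l' ih =>
      intro hmem x a b hab hhead a''
      have hσ : σ ∈ S ∪ S⁻¹ := hmem σ (List.mem_cons_self)
      obtain ⟨hca, hcb⟩ := hhead σ (by simp)
      obtain ⟨Nx, hNx⟩ := hVbound x
      have hcrossn : ∀ n : ℕ, Nx ≤ n → ∀ d : ℕ,
          Conn (cayleyGraph S) K (x * Evec t (evec p b d + evec p a n))
            ((x * σ) * Evec t (evec p b d + evec p a n)) := by
        intro n hn d
        have hsrc : x * Evec t (evec p b d + evec p a n) ∉ Bad := by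
          refine hnotbad x Nx hNx n hn _ ⟨a, ?_⟩
          simp only [Pi.add_apply, evec_apply]
          split_ifs <;> omega
        have h := hcross _ hsrc σ hσ
        have heq : x * Evec t (evec p b d + evec p a n) * σ =
            (x * σ) * Evec t (evec p b d + evec p a n) := by
          rw [mul_assoc, mul_assoc, (hEcomm σ a b hca hcb d n).eq]
        rwa [heq] at h
      rcases l' with _ | ⟨τ, l''⟩
      · obtain ⟨Ns, hNs⟩ := hswitch (x * σ) a b a'' hab
        refine ⟨max Nx Ns, fun n hn d => ?_⟩
        have c1 := hcrossn n (le_trans (le_max_left _ _) hn) d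
        have c2 := hNs n (le_trans (le_max_right _ _) hn) d
        have := c1.trans c2
        have heq2 : x * [σ].prod = x * σ := by simp
        rwa [heq2]
      · have hτ : τ ∈ S ∪ S⁻¹ := hmem τ (by simp)
        obtain ⟨a₂, b₂, hab₂, hca₂, hcb₂⟩ := dir τ hτ
        obtain ⟨Ns, hNs⟩ := hswitch (x * σ) a b a₂ hab
        obtain ⟨Ni, hNi⟩ := ih (fun ρ hρ => hmem ρ (List.mem_cons_of_mem _ hρ)) (x * σ) a₂ b₂ hab₂
          (by
            intro ρ hρ
            have hρτ : ρ = τ := by have := hρ; simp at this; exact this.symm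
            rw [hρτ]
            exact ⟨hca₂, hcb₂⟩) a''
        refine ⟨max Nx (max Ns Ni), fun n hn d => ?_⟩
        have c1 := hcrossn n (le_trans (le_max_left _ _) hn) d
        have c2 := hNs n (le_trans (le_trans (le_max_left _ _) (le_max_right _ _)) hn) d
        have c3 := hNi n (le_trans (le_trans (le_max_right _ _) (le_max_right _ _)) hn) 0
        have e0 : evec p b₂ ((0 : ℕ) : ℤ) + evec p a₂ (n : ℤ) = evec p a₂ (n : ℤ) := by
          rw [Nat.cast_zero, evec_zero, zero_add]
        rw [e0] at c3
        have hchain := (c1.trans c2).trans c3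
        have heq2 : x * (σ :: τ :: l'').prod = x * σ * (τ :: l'').prod := by
          rw [List.prod_cons, ← mul_assoc]
        rw [heq2]
        exact hchain
  -- safe rows
  have hrow : ∀ (x : G) (a b : Fin p), a ≠ b →
      ∃ d : ℕ, d ≤ M ∧ ∀ i : ℕ, x * Evec t (evec p b d + evec p a i) ∉ Bad := by
    intro x a b hab
    by_contra hcon
    have hch : ∀ d : Fin (M + 1), ∃ i : ℕ,
        x * Evec t (evec p b (d : ℕ) + evec p a i) ∈ Bad := by
      intro d
      by_contra hno
      push_neg at hno
      exact hcon ⟨d, Nat.lt_succ_iff.mp d.isLt, hno⟩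
    choose ι hι using hch
    have hba : ¬ (b = a) := fun hba => hab hba.symm
    have hinj2 : Function.Injective
        (fun d : Fin (M + 1) => x * Evec t (evec p b (d : ℕ) + evec p a (ι d))) := by
      intro d₁ d₂ hEq
      have hv := hxinj x hEq
      have hb := congrFun hv b
      simp only [Pi.add_apply, evec_apply, if_pos rfl, if_neg hba, add_zero] at hb
      exact Fin.ext (by exact_mod_cast hb)
    have hmaps : ∀ d : Fin (M + 1),
        x * Evec t (evec p b (d : ℕ) + evec p a (ι d)) ∈ hBadfin.toFinset :=
      fun d => hBadfin.mem_toFinset.2 (hι d)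
    have hle := Fintype.card_le_of_injective
      (fun d : Fin (M + 1) => (⟨_, hmaps d⟩ : {y // y ∈ hBadfin.toFinset}))
      (fun d₁ d₂ hEq => hinj2 (congrArg Subtype.val hEq))
    rw [Fintype.card_coe, Fintype.card_fin, ← hM] at hle
    omega
  -- the enlarged obstacle
  refine ⟨K ∪ Bad ∪ ⋃ (bb : Fin p), ⋃ (j : Fin (M + 1)),
      (fun y => y * (Evec t (evec p bb (j : ℕ)))⁻¹) '' Bad, ?_,
      fun x hx => Or.inl (Or.inl hx), ?_⟩
  · exact (hK.union hBadfin).union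
      (Set.finite_iUnion fun bb => Set.finite_iUnion fun j => hBadfin.image _)
  intro g hg h hh
  have hgBad : g ∉ Bad := fun hb => hg (Or.inl (Or.inr hb))
  have hhBad : h ∉ Bad := fun hb => hh (Or.inl (Or.inr hb))
  have hglow : ∀ (bb : Fin p) (j : ℕ), j ≤ M → g * Evec t (evec p bb j) ∉ Bad := by
    intro bb j hj hbad
    refine hg (Or.inr (Set.mem_iUnion.2 ⟨bb, Set.mem_iUnion.2
      ⟨⟨j, Nat.lt_succ_of_le hj⟩, ⟨g * Evec t (evec p bb j), hbad, by simp⟩⟩⟩))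
  have hhlow : ∀ (bb : Fin p) (j : ℕ), j ≤ M → h * Evec t (evec p bb j) ∉ Bad := by
    intro bb j hj hbad
    refine hh (Or.inr (Set.mem_iUnion.2 ⟨bb, Set.mem_iUnion.2
      ⟨⟨j, Nat.lt_succ_of_le hj⟩, ⟨h * Evec t (evec p bb j), hbad, by simp⟩⟩⟩))
  obtain ⟨l, hlmem, hlprod⟩ := exists_word hS (g⁻¹ * h)
  have hgh : g * l.prod = h := by rw [hlprod, mul_inv_cancel_left]
  rcases l with _ | ⟨σ, l'⟩
  · have hgh' : g = h := by simpa using hgh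
    rw [← hgh']
    exact Conn.refl (hBadK g hgBad)
  · obtain ⟨a, b, hab, hca, hcb⟩ := dir σ (hlmem σ (List.mem_cons_self))
    obtain ⟨dg, hdgM, hdgrow⟩ := hrow g a b hab
    obtain ⟨dh, hdhM, hdhrow⟩ := hrow h a b hab
    obtain ⟨Nt, hNt⟩ := htrav (σ :: l') hlmem g a b hab
      (by
        intro ρ hρ
        have hρσ : ρ = σ := by have := hρ; simp at this; exact this.symm
        rw [hρσ]
        exact ⟨hca, hcb⟩) a
    obtain ⟨Nh, hNh⟩ := hVbound h
    set n : ℕ := max Nt Nh with hn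
    have A1 : Conn (cayleyGraph S) K g (g * Evec t (evec p b dg)) := by
      have h1 := hclimb g 0 b dg (fun j hj => by
        rw [zero_add]; exact hglow b j (le_trans hj hdgM))
      rw [Evec_zero', mul_one, zero_add] at h1
      exact h1
    have A2 : Conn (cayleyGraph S) K (g * Evec t (evec p b dg))
        (g * Evec t (evec p b dg + evec p a n)) :=
      hclimb g (evec p b dg) a n (fun j _ => hdgrow j)
    have T := hNt n (le_max_left _ _) dg
    rw [hgh] at T
    have D1 : Conn (cayleyGraph S) K (h * Evec t (evec p a n))
        (h * Evec t (evec p a n + evec p b dh)) := by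
      refine hclimb h (evec p a n) b dh
        (fun j hj => hnotbad h Nh hNh n (le_max_right _ _) _ ⟨a, ?_⟩)
      simp only [Pi.add_apply, evec_apply]
      split_ifs <;> omega
    have D2 : Conn (cayleyGraph S) K (h * Evec t (evec p a n + evec p b dh))
        (h * Evec t (evec p b dh)) := by
      have h2 := hclimb h (evec p b dh) a n (fun j _ => hdhrow j)
      have hveq : evec p b (dh : ℤ) + evec p a (n : ℤ) =
          evec p a (n : ℤ) + evec p b (dh : ℤ) := by abel
      rw [hveq] at h2
      exact h2.symm
    have D3 : Conn (cayleyGraph S) K (h * Evec t (evec p b dh)) h := by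
      have h3 := hclimb h 0 b dh (fun j hj => by
        rw [zero_add]; exact hhlow b j (le_trans hj hdhM))
      rw [Evec_zero', mul_one, zero_add] at h3
      exact h3.symm
    exact ((((A1.trans A2).trans T).trans D1).trans D2).trans D3

end Escape

end OneEnded

/-- If a finite presentation satisfies the hypotheses of the Main Theorem and every generator
occurs in some relation, then the group is one-ended: the Cayley graph with respect to the
image of the generating set has exactly one end. -/
theorem one_ended_of_mainHyp {α : Type*} [Finite α] [DecidableEq α]
    (rels : Set (FreeGroup α)) (hrels : rels.Finite)
    (hmain : SatisfiesMainHyp rels)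
    (hocc : ∀ s : α, ∃ r ∈ rels, OccursIn s r) :
    (cayleyGraph (Set.range (PresentedGroup.of (rels := rels)))).end.Nonempty ∧
      (cayleyGraph (Set.range (PresentedGroup.of (rels := rels)))).end.Subsingleton := by
  classical
  obtain ⟨p, hp3, t, hcomm, hinj, hrel⟩ := hmain
  set S : Set (PresentedGroup rels) := Set.range (PresentedGroup.of (rels := rels)) with hSdef
  have hS : Subgroup.closure S = ⊤ := PresentedGroup.closure_range_of rels
  have hSfin : S.Finite := Set.finite_range _
  have hdirS : ∀ s : α, ∃ a b : Fin p, a ≠ b ∧ Commute (t a) (PresentedGroup.of s) ∧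
      Commute (t b) (PresentedGroup.of s) := by
    intro s
    obtain ⟨r, hr, hsr⟩ := hocc s
    obtain ⟨i₀, h1, h2⟩ := hrel r hr
    obtain ⟨i, hne, hci⟩ := h2 s hsr
    exact ⟨i, i₀, fun he => hne (he ▸ rfl), hci, h1 s hsr⟩
  have dir : ∀ σ ∈ S ∪ S⁻¹, ∃ a b : Fin p, a ≠ b ∧ Commute (t a) σ ∧ Commute (t b) σ := by
    rintro σ (⟨s, rfl⟩ | hσ)
    · exact hdirS s
    · rw [Set.mem_inv] at hσ
      obtain ⟨s, hs⟩ := hσ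
      obtain ⟨a, b, hab, hca, hcb⟩ := hdirS s
      have hca' : Commute (t a) σ⁻¹ := hs ▸ hca
      have hcb' : Commute (t b) σ⁻¹ := hs ▸ hcb
      exact ⟨a, b, hab, by simpa using hca'.inv_right, by simpa using hcb'.inv_right⟩
  haveI : Nonempty (Fin p) := ⟨⟨0, by omega⟩⟩
  haveI : Infinite (PresentedGroup rels) := by
    have hinjE : Function.Injective (OneEnded.Evec t) := hinj
    exact Infinite.of_injective _ hinjE
  letI : (cayleyGraph S).LocallyFinite := OneEnded.cayley_locallyFinite hSfin
  haveI : Fact (cayleyGraph S).Preconnected := ⟨OneEnded.cayley_preconnected hS⟩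
  haveI : ∀ j : (Finset (PresentedGroup rels))ᵒᵖ,
      Finite ((cayleyGraph S).componentComplFunctor.obj j) :=
    fun j => SimpleGraph.componentCompl_finite (G := cayleyGraph S) j.unop
  haveI : ∀ j : (Finset (PresentedGroup rels))ᵒᵖ,
      Nonempty ((cayleyGraph S).componentComplFunctor.obj j) :=
    fun j => SimpleGraph.componentCompl_nonempty_of_infinite (cayleyGraph S) j.unop

  constructor
  · exact nonempty_sections_of_finite_inverse_system (cayleyGraph S).componentComplFunctor
  · intro e₁ he₁ e₂ he₂
    funext K
    obtain ⟨K', hK'fin, hKK', hescape⟩ := OneEnded.exists_escape S hS hSfin t hcomm hinj dir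
      (↑K.unop) K.unop.finite_toSet
    set L : Finset (PresentedGroup rels) := K.unop ∪ hK'fin.toFinset with hL
    have hsub : K.unop ⊆ L := Finset.subset_union_left
    obtain ⟨g, hgL, hgmk⟩ := (e₁ (Opposite.op L)).exists_eq_mk
    obtain ⟨h, hhL, hhmk⟩ := (e₂ (Opposite.op L)).exists_eq_mk
    have hgK' : g ∉ K' := fun hgk => hgL (by
      simp only [Opposite.unop_op, Finset.mem_coe]
      exact Finset.mem_union_right _ (hK'fin.mem_toFinset.2 hgk))
    have hhK' : h ∉ K' := fun hhk => hhL (by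
      simp only [Opposite.unop_op, Finset.mem_coe]
      exact Finset.mem_union_right _ (hK'fin.mem_toFinset.2 hhk))
    have hgK : g ∉ (↑K.unop : Set (PresentedGroup rels)) := fun hgk => hgL (by
      simp only [Opposite.unop_op, Finset.mem_coe]
      exact hsub (by simpa using hgk))
    have hhK : h ∉ (↑K.unop : Set (PresentedGroup rels)) := fun hhk => hhL (by
      simp only [Opposite.unop_op, Finset.mem_coe]
      exact hsub (by simpa using hhk))
    have hconn := hescape g hgK' h hhK'
    have hreach := hconn.reachable_induce hgK hhK
    have hcc : (cayleyGraph S).componentComplMk hgK = (cayleyGraph S).componentComplMk hhK :=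
      SimpleGraph.ConnectedComponent.sound hreach
    have h1 := SimpleGraph.end_hom_mk_of_mk (cayleyGraph S) he₁
      (CategoryTheory.opHomOfLE hsub) hgL hgmk.symm
    have h2 := SimpleGraph.end_hom_mk_of_mk (cayleyGraph S) he₂
      (CategoryTheory.opHomOfLE hsub) hhL hhmk.symm
    rw [h1, h2]
    exact hcc
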